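/- Let d be odd and ψ ∈ ℂ^{(ZMod d)^n} a state vector whose Wigner function is everywhere nonnegative. Then |ψ(q)|² ≥ |ψ(q-x)|·|ψ(q+x)| for all q, x ∈ (ZMod d)^n. -/

import Mathlib

open scoped BigOperators
open Finset Matrix
open scoped ComplexOrder

attribute [instance] Classical.propDecidable

/-- The character `χ(t) = exp(2πit/d)` on `ZMod d`. -/
noncomputable def chi (d : ℕ) (t : ZMod d) : ℂ :=
  Complex.exp (2 * Real.pi * Complex.I * (t.val : ℂ) / (d : ℂ))

/-- The standard symplectic form on `(Fin n → R) × (Fin n → R)`. -/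
def symp (R : Type) [CommRing R] (n : ℕ) (v w : (Fin n → R) × (Fin n → R)) : R :=
  (∑ i, v.1 i * w.2 i) - ∑ i, v.2 i * w.1 i

/-- Single-particle Weyl operator `w(p,q) = χ(-2⁻¹pq) ẑ(p) x̂(q)` on `ℂ^d`. -/
noncomputable def weyl1 (d : ℕ) (p q : ZMod d) : Matrix (ZMod d) (ZMod d) ℂ :=
  Matrix.of fun x y => chi d (-(2⁻¹ : ZMod d) * p * q + p * x) * (if y = x - q then 1 else 0)

/-- Multi-particle Weyl operator on `(ℂ^d)^{⊗n}` in coordinates. -/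
noncomputable def weyl (d n : ℕ) (p q : Fin n → ZMod d) :
    Matrix (Fin n → ZMod d) (Fin n → ZMod d) ℂ :=
  Matrix.of fun x y =>
    chi d (-(2⁻¹ : ZMod d) * (∑ i, p i * q i) + ∑ i, p i * x i) * (if y = x - q then 1 else 0)

/-- Weyl operator indexed by a phase space point. -/
noncomputable def weylV (d n : ℕ) (v : (Fin n → ZMod d) × (Fin n → ZMod d)) :
    Matrix (Fin n → ZMod d) (Fin n → ZMod d) ℂ :=
  weyl d n v.1 v.2

/-- Action of the Weyl operator on wave functions:
`(w(p,q)ψ)(y) = χ(-2⁻¹pq + py) ψ(y-q)`. -/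
noncomputable def weylAct (d n : ℕ) (p q : Fin n → ZMod d) (ψ : (Fin n → ZMod d) → ℂ) :
    (Fin n → ZMod d) → ℂ :=
  fun y => chi d (-(2⁻¹ : ZMod d) * (∑ i, p i * q i) + ∑ i, p i * y i) * ψ (y - q)

/-- Wigner function of a pure state `ψ`. -/
noncomputable def wignerPure (d n : ℕ) [NeZero d] (ψ : (Fin n → ZMod d) → ℂ)
    (p q : Fin n → ZMod d) : ℂ :=
  ((d : ℂ) ^ n)⁻¹ * ∑ ξ : Fin n → ZMod d, chi d (-(∑ i, ξ i * p i)) *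
    (starRingEnd ℂ) (ψ (q - (2⁻¹ : ZMod d) • ξ)) * ψ (q + (2⁻¹ : ZMod d) • ξ)


section Aux

lemma chi_eq_pow (d : ℕ) (t : ZMod d) :
    chi d t = Complex.exp (2 * Real.pi * Complex.I / d) ^ t.val := by
  rw [chi, ← Complex.exp_nat_mul]
  congr 1; ring

lemma zeta_pow_d (d : ℕ) [NeZero d] :
    Complex.exp (2 * Real.pi * Complex.I / d) ^ d = 1 := by
  rw [← Complex.exp_nat_mul]
  have hd : (d : ℂ) ≠ 0 := Nat.cast_ne_zero.mpr (NeZero.ne d)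
  rw [show (d : ℂ) * (2 * Real.pi * Complex.I / d) = 2 * Real.pi * Complex.I by
    field_simp]
  exact Complex.exp_two_pi_mul_I

lemma chi_zero (d : ℕ) [NeZero d] : chi d 0 = 1 := by
  simp [chi, ZMod.val_zero]

lemma chi_add (d : ℕ) [NeZero d] (a b : ZMod d) :
    chi d (a + b) = chi d a * chi d b := by
  rw [chi_eq_pow, chi_eq_pow, chi_eq_pow, ← pow_add, ZMod.val_add,
    ← pow_eq_pow_mod _ (zeta_pow_d d)]

lemma chi_ne_one (d : ℕ) [NeZero d] {s : ZMod d} (hs : s ≠ 0) : chi d s ≠ 1 := by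
  intro h
  rw [chi, Complex.exp_eq_one_iff] at h
  obtain ⟨k, hk⟩ := h
  have h2 : (2 * Real.pi * Complex.I) ≠ 0 := by
    simp [Real.pi_ne_zero, Complex.I_ne_zero, Complex.ofReal_ne_zero]
  have hd : (d : ℂ) ≠ 0 := Nat.cast_ne_zero.mpr (NeZero.ne d)
  have hc : (s.val : ℂ) = (k : ℂ) * d := by
    have hk' : 2 * Real.pi * Complex.I * (s.val : ℂ) = 2 * Real.pi * Complex.I * ((k:ℂ) * d) := by
      have := congrArg (· * (d:ℂ)) hk
      simp only [div_mul_cancel₀ _ hd] at this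
      rw [this]; ring
    exact mul_left_cancel₀ h2 hk'
  have hz : (s.val : ℤ) = k * d := by exact_mod_cast hc
  have hv1 : 0 < s.val := Nat.pos_of_ne_zero (fun h0 => hs ((ZMod.val_eq_zero s).mp h0))
  have hv2 : s.val < d := ZMod.val_lt s
  have hdz : (0:ℤ) < d := by exact_mod_cast NeZero.pos d
  rcases le_or_gt k 0 with hk0 | hk0
  · have : k * d ≤ 0 := mul_nonpos_of_nonpos_of_nonneg hk0 hdz.le
    omega
  · have : (d:ℤ) ≤ k * d := le_mul_of_one_le_left hdz.le hk0
    omega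

lemma abs_chi (d : ℕ) (t : ZMod d) : ‖chi d t‖ = 1 := by
  rw [chi, Complex.norm_exp]
  have : (2 * ↑Real.pi * Complex.I * (t.val : ℂ) / (d : ℂ)).re = 0 := by
    simp [Complex.div_re, Complex.mul_re, Complex.mul_im]
  rw [this, Real.exp_zero]

lemma sum_chi_vec (d : ℕ) [NeZero d] (n : ℕ) (s : Fin n → ZMod d) :
    ∑ p : Fin n → ZMod d, chi d (∑ i, s i * p i)
      = if s = 0 then ((d:ℂ)^n) else 0 := by
  classical
  split_ifs with h
  · subst h
    simp only [Pi.zero_apply, zero_mul, Finset.sum_const_zero, chi_zero]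
    simp [Finset.card_univ, ZMod.card]
  · obtain ⟨i0, hi0⟩ : ∃ i, s i ≠ 0 := by
      by_contra hc; push_neg at hc; exact h (funext hc)
    set e : Fin n → ZMod d := Pi.single i0 1 with he
    have hse : ∑ i, s i * e i = s i0 := by
      simp [he, Pi.single_apply, mul_ite]
    have key : chi d (s i0) * (∑ p : Fin n → ZMod d, chi d (∑ i, s i * p i))
        = ∑ p : Fin n → ZMod d, chi d (∑ i, s i * p i) := by
      rw [Finset.mul_sum]
      refine Fintype.sum_equiv (Equiv.addRight e) _ _ (fun p => ?_)
      rw [← chi_add]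
      congr 1
      simp only [Equiv.coe_addRight, Pi.add_apply, mul_add, Finset.sum_add_distrib, hse]
      ring
    have hz : (chi d (s i0) - 1) * (∑ p : Fin n → ZMod d, chi d (∑ i, s i * p i)) = 0 := by
      rw [sub_mul, one_mul, key, sub_self]
    rcases mul_eq_zero.mp hz with h1 | h1
    · exact absurd (sub_eq_zero.mp h1) (chi_ne_one d hi0)
    · exact h1

lemma inv_formula (d n : ℕ) [NeZero d] (ψ : (Fin n → ZMod d) → ℂ)
    (q ξ' : Fin n → ZMod d) :
    ∑ p : Fin n → ZMod d, chi d (∑ i, ξ' i * p i) * wignerPure d n ψ p q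
      = (starRingEnd ℂ) (ψ (q - (2⁻¹ : ZMod d) • ξ')) * ψ (q + (2⁻¹ : ZMod d) • ξ') := by
  classical
  have hdn : ((d:ℂ)^n) ≠ 0 := pow_ne_zero _ (Nat.cast_ne_zero.mpr (NeZero.ne d))
  have step : ∀ p : Fin n → ZMod d,
      chi d (∑ i, ξ' i * p i) * wignerPure d n ψ p q
        = ∑ ξ : Fin n → ZMod d, ((d:ℂ)^n)⁻¹ * chi d (∑ i, (ξ' - ξ) i * p i) *
            (starRingEnd ℂ) (ψ (q - (2⁻¹ : ZMod d) • ξ)) * ψ (q + (2⁻¹ : ZMod d) • ξ) := by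
    intro p
    rw [wignerPure, Finset.mul_sum, Finset.mul_sum]
    refine Finset.sum_congr rfl (fun ξ _ => ?_)
    have hchi : chi d (∑ i, ξ' i * p i) * chi d (-(∑ i, ξ i * p i))
        = chi d (∑ i, (ξ' - ξ) i * p i) := by
      rw [← chi_add]
      congr 1
      simp only [Pi.sub_apply, sub_mul, Finset.sum_sub_distrib]
      ring
    calc chi d (∑ i, ξ' i * p i) * (((d:ℂ)^n)⁻¹ * (chi d (-(∑ i, ξ i * p i)) *
            (starRingEnd ℂ) (ψ (q - (2⁻¹ : ZMod d) • ξ)) * ψ (q + (2⁻¹ : ZMod d) • ξ)))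
        = ((d:ℂ)^n)⁻¹ * (chi d (∑ i, ξ' i * p i) * chi d (-(∑ i, ξ i * p i))) *
            (starRingEnd ℂ) (ψ (q - (2⁻¹ : ZMod d) • ξ)) * ψ (q + (2⁻¹ : ZMod d) • ξ) := by ring
      _ = _ := by rw [hchi]
  simp only [step]
  rw [Finset.sum_comm]
  have inner : ∀ ξ : Fin n → ZMod d,
      (∑ p : Fin n → ZMod d, ((d:ℂ)^n)⁻¹ * chi d (∑ i, (ξ' - ξ) i * p i) *
          (starRingEnd ℂ) (ψ (q - (2⁻¹ : ZMod d) • ξ)) * ψ (q + (2⁻¹ : ZMod d) • ξ))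
        = (if ξ = ξ' then (1:ℂ) else 0) *
          (starRingEnd ℂ) (ψ (q - (2⁻¹ : ZMod d) • ξ)) * ψ (q + (2⁻¹ : ZMod d) • ξ) := by
    intro ξ
    have : (∑ p : Fin n → ZMod d, ((d:ℂ)^n)⁻¹ * chi d (∑ i, (ξ' - ξ) i * p i) *
          (starRingEnd ℂ) (ψ (q - (2⁻¹ : ZMod d) • ξ)) * ψ (q + (2⁻¹ : ZMod d) • ξ))
        = ((d:ℂ)^n)⁻¹ * (∑ p : Fin n → ZMod d, chi d (∑ i, (ξ' - ξ) i * p i)) *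
          (starRingEnd ℂ) (ψ (q - (2⁻¹ : ZMod d) • ξ)) * ψ (q + (2⁻¹ : ZMod d) • ξ) := by
      rw [← Finset.sum_mul, ← Finset.sum_mul, ← Finset.mul_sum]
    rw [this, sum_chi_vec]
    by_cases hξ : ξ = ξ'
    · simp [hξ, sub_self, inv_mul_cancel₀ hdn]
    · have : ξ' - ξ ≠ 0 := fun hc => hξ (by
        have := sub_eq_zero.mp hc; exact this.symm)
      simp [this, hξ]
  simp only [inner]
  simp only [ite_mul, one_mul, zero_mul]
  rw [Finset.sum_ite_eq' Finset.univ ξ'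
    (fun ξ => (starRingEnd ℂ) (ψ (q - (2⁻¹ : ZMod d) • ξ)) * ψ (q + (2⁻¹ : ZMod d) • ξ))]
  simp

end Aux

/-- Modulus inequality for states with nonnegative Wigner function. -/
theorem modulus_inequality (d n : ℕ) [NeZero d] (hd : Odd d)
    (ψ : (Fin n → ZMod d) → ℂ)
    (hψ : ∑ x : Fin n → ZMod d, Complex.normSq (ψ x) = 1)
    (hpos : ∀ p q : Fin n → ZMod d, 0 ≤ wignerPure d n ψ p q)
    (q x : Fin n → ZMod d) :
    ‖ψ (q - x)‖ * ‖ψ (q + x)‖ ≤ ‖ψ q‖ ^ 2 := by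
  classical
  set W : (Fin n → ZMod d) → ℂ := fun p => wignerPure d n ψ p q with hW
  have hWre : ∀ p, ‖W p‖ = (W p).re := by
    intro p
    have h := hpos p q
    rw [Complex.le_def] at h
    obtain ⟨h1, h2⟩ := h
    simp only [Complex.zero_re, Complex.zero_im] at h1 h2
    have : W p = ((W p).re : ℂ) := Complex.ext rfl (by simp [hW, ← h2])
    rw [this]
    simp [Complex.norm_real, Real.norm_eq_abs, abs_of_nonneg (show 0 ≤ (W p).re from h1)]
  have hu : IsUnit (2 : ZMod d) := by
    have hcop : Nat.Coprime 2 d := Nat.coprime_two_left.mpr hd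
    have := (ZMod.isUnit_iff_coprime 2 d).mpr hcop
    simpa using this
  have h2inv : (2⁻¹ : ZMod d) * 2 = 1 := ZMod.inv_mul_of_unit 2 hu
  have hsum0 : ∑ p, W p = (starRingEnd ℂ) (ψ q) * ψ q := by
    have := inv_formula d n ψ q 0
    simpa [chi_zero] using this
  set ξ' : Fin n → ZMod d := fun i => 2 * x i with hξ'
  have hsm : (2⁻¹ : ZMod d) • ξ' = x := by
    funext i
    simp only [Pi.smul_apply, hξ', smul_eq_mul, ← mul_assoc, h2inv, one_mul]
  have hsum1 : ∑ p, chi d (∑ i, ξ' i * p i) * W p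
      = (starRingEnd ℂ) (ψ (q - x)) * ψ (q + x) := by
    have := inv_formula d n ψ q ξ'
    rwa [hsm] at this
  calc ‖ψ (q - x)‖ * ‖ψ (q + x)‖
      = ‖(starRingEnd ℂ) (ψ (q - x)) * ψ (q + x)‖ := by
        rw [norm_mul, Complex.norm_conj]
    _ = ‖∑ p, chi d (∑ i, ξ' i * p i) * W p‖ := by rw [hsum1]
    _ ≤ ∑ p, ‖chi d (∑ i, ξ' i * p i) * W p‖ :=
        norm_sum_le _ _
    _ = ∑ p, (W p).re := by
        refine Finset.sum_congr rfl (fun p _ => ?_)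
        rw [norm_mul, abs_chi, one_mul, hWre]
    _ = (∑ p, W p).re := by rw [Complex.re_sum]
    _ = ‖ψ q‖ ^ 2 := by
        rw [hsum0, mul_comm, Complex.mul_conj]
        simp [Complex.sq_norm]
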